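/- Norm of a product of polynomials: Let p_1,…,p_n be multivariate polynomials in d real variables and let p(x) = ∏_{j=1}^n p_j(x) be their product. Then ‖p‖² ≤ n^{Σ_{j=1}^n deg(p_j)} · ∏_{j=1}^n ‖p_j‖². -/

import Mathlib

open Finset

/-- The norm of a multivariate polynomial: the Euclidean norm of its coefficient vector. -/
noncomputable def polyNorm {d : ℕ} (p : MvPolynomial (Fin d) ℝ) : ℝ :=
  Real.sqrt (∑ α ∈ p.support, (p.coeff α) ^ 2)

lemma polyNorm_sq {d : ℕ} (p : MvPolynomial (Fin d) ℝ) :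
    polyNorm p ^ 2 = ∑ α ∈ p.support, (p.coeff α) ^ 2 := by
  rw [polyNorm, Real.sq_sqrt]; positivity

lemma multichoose_le_pow : ∀ (n k : ℕ), Nat.multichoose n k ≤ n ^ k
  | n, 0 => by simp [Nat.multichoose_zero_right]
  | 0, k + 1 => by simp [Nat.multichoose_zero_succ]
  | n + 1, k + 1 => by
    rw [Nat.multichoose_succ_succ]
    have h1 := multichoose_le_pow n (k + 1)
    have h2 := multichoose_le_pow (n + 1) k
    have h3 : n ^ (k + 1) ≤ n * (n + 1) ^ k := by
      rw [pow_succ']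
      exact Nat.mul_le_mul_left n (Nat.pow_le_pow_left (Nat.le_succ n) k)
    have h4 : (n + 1) ^ (k + 1) = n * (n + 1) ^ k + (n + 1) ^ k := by ring
    omega

lemma card_piAntidiag_le (n k : ℕ) :
    (piAntidiag (univ : Finset (Fin n)) k).card ≤ n ^ k := by
  classical
  rw [← map_sym_eq_piAntidiag, card_map]
  calc ((univ : Finset (Fin n)).sym k).card ≤ Fintype.card (Sym (Fin n) k) := card_le_univ _
    _ = Nat.multichoose n k := by
        rw [Sym.card_sym_eq_multichoose, Fintype.card_fin]
    _ ≤ n ^ k := multichoose_le_pow n k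

lemma card_finsuppAntidiag_le (d n : ℕ) (α : Fin d →₀ ℕ) :
    (finsuppAntidiag (univ : Finset (Fin n)) α).card ≤ n ^ (α.sum fun _ e => e) := by
  classical
  rw [finsuppAntidiag, card_map, card_attach]
  have hmem : ∀ f ∈ piAntidiag (univ : Finset (Fin n)) α,
      (fun i j => f j i) ∈
        Fintype.piFinset (fun i : Fin d => piAntidiag (univ : Finset (Fin n)) (α i)) := by
    intro f hf
    rw [mem_piAntidiag] at hf
    rw [Fintype.mem_piFinset]
    intro i
    rw [mem_piAntidiag]
    refine ⟨?_, fun j _ => mem_univ j⟩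
    have := congrArg (fun g : Fin d →₀ ℕ => g i) hf.1
    simpa [Finsupp.finset_sum_apply] using this
  have hinj : Set.InjOn (fun f : Fin n → (Fin d →₀ ℕ) => (fun i j => f j i))
      (piAntidiag (univ : Finset (Fin n)) α) := by
    intro f _ g _ h
    funext j
    ext i
    exact congrFun (congrFun h i) j
  calc (piAntidiag (univ : Finset (Fin n)) α).card
      ≤ (Fintype.piFinset (fun i : Fin d => piAntidiag (univ : Finset (Fin n)) (α i))).card :=
        card_le_card_of_injOn _ hmem hinj
    _ = ∏ i, (piAntidiag (univ : Finset (Fin n)) (α i)).card := Fintype.card_piFinset _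
    _ ≤ ∏ i, n ^ (α i) := Finset.prod_le_prod (fun i _ => Nat.zero_le _)
        (fun i _ => card_piAntidiag_le n (α i))
    _ = n ^ (∑ i, α i) := by rw [← Finset.prod_pow_eq_pow_sum]
    _ = n ^ (α.sum fun _ e => e) := by
        rw [Finsupp.sum_fintype]
        intro i; rfl

lemma mv_coeff_prod {d n : ℕ} (p : Fin n → MvPolynomial (Fin d) ℝ) (α : Fin d →₀ ℕ) :
    (∏ j, p j).coeff α =
      ∑ l ∈ finsuppAntidiag (univ : Finset (Fin n)) α, ∏ j, (p j).coeff (l j) := by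
  classical
  have hcoe : ((∏ j, p j : MvPolynomial (Fin d) ℝ) : MvPowerSeries (Fin d) ℝ) =
      ∏ j, ((p j : MvPolynomial (Fin d) ℝ) : MvPowerSeries (Fin d) ℝ) :=
    map_prod MvPolynomial.coeToMvPowerSeries.ringHom _ _
  calc (∏ j, p j).coeff α
      = MvPowerSeries.coeff α ((∏ j, p j : MvPolynomial (Fin d) ℝ) : MvPowerSeries (Fin d) ℝ) :=
        (MvPolynomial.coeff_coe _ _).symm
    _ = MvPowerSeries.coeff α (∏ j, ((p j : MvPolynomial (Fin d) ℝ) : MvPowerSeries (Fin d) ℝ)) := by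
        rw [hcoe]
    _ = ∑ l ∈ finsuppAntidiag (univ : Finset (Fin n)) α,
          ∏ j, MvPowerSeries.coeff (l j) ((p j : MvPolynomial (Fin d) ℝ) : MvPowerSeries (Fin d) ℝ) :=
        MvPowerSeries.coeff_prod _ _ _
    _ = ∑ l ∈ finsuppAntidiag (univ : Finset (Fin n)) α, ∏ j, (p j).coeff (l j) := by
        simp [MvPolynomial.coeff_coe]

/-- Norm of a product of polynomials: for multivariate polynomials `p_1,…,p_n`,
`‖∏ p_j‖² ≤ n^{Σ deg(p_j)} · ∏ ‖p_j‖²`. -/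
theorem polyNorm_prod_sq_le (d n : ℕ) (p : Fin n → MvPolynomial (Fin d) ℝ) :
    polyNorm (∏ j, p j) ^ 2 ≤
      (n : ℝ) ^ (∑ j, (p j).totalDegree) * ∏ j, polyNorm (p j) ^ 2 := by
  classical
  rcases Nat.eq_zero_or_pos n with rfl | hn
  · rw [show (∏ j : Fin 0, p j) = 1 from by simp, polyNorm_sq]
    have h1 : (1 : MvPolynomial (Fin d) ℝ).support = {0} := by
      rw [show (1 : MvPolynomial (Fin d) ℝ) = MvPolynomial.monomial 0 1 from by
        simp [MvPolynomial.monomial_zero']]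
      classical
      rw [MvPolynomial.support_monomial, if_neg one_ne_zero]
    simp [h1]
  set S := ∑ j, (p j).totalDegree with hS
  set P := ∏ j, p j with hP
  set fA : (Fin d →₀ ℕ) → Finset (Fin n →₀ (Fin d →₀ ℕ)) :=
    fun α => finsuppAntidiag (univ : Finset (Fin n)) α with hfA
  set t : (Fin n → (Fin d →₀ ℕ)) → ℝ := fun k => ∏ j, (p j).coeff (k j) ^ 2 with ht
  -- pointwise bound via Cauchy-Schwarz
  have step1 : ∀ α ∈ P.support, (P.coeff α) ^ 2 ≤ (n : ℝ) ^ S * ∑ l ∈ fA α, t ⇑l := by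
    intro α hα
    have hcs : (P.coeff α) ^ 2 ≤ ((fA α).card : ℝ) * ∑ l ∈ fA α, (∏ j, (p j).coeff (l j)) ^ 2 := by
      rw [hP, mv_coeff_prod]
      exact sq_sum_le_card_mul_sum_sq
    have hterm : ∀ l : Fin n →₀ (Fin d →₀ ℕ), (∏ j, (p j).coeff (l j)) ^ 2 = t ⇑l := by
      intro l; rw [ht]; simp [← Finset.prod_pow]
    have hcard : ((fA α).card : ℝ) ≤ (n : ℝ) ^ S := by
      have h1 := card_finsuppAntidiag_le d n α
      have h2 : (α.sum fun _ e => e) ≤ S :=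
        le_trans (MvPolynomial.le_totalDegree hα)
          (le_trans (MvPolynomial.totalDegree_finset_prod univ p) (le_of_eq hS.symm))
      have h3 : (fA α).card ≤ n ^ S :=
        le_trans h1 (Nat.pow_le_pow_right hn h2)
      exact_mod_cast h3
    calc (P.coeff α) ^ 2 ≤ ((fA α).card : ℝ) * ∑ l ∈ fA α, (∏ j, (p j).coeff (l j)) ^ 2 := hcs
      _ = ((fA α).card : ℝ) * ∑ l ∈ fA α, t ⇑l := by
          congr 1; exact Finset.sum_congr rfl fun l _ => hterm l
      _ ≤ (n : ℝ) ^ S * ∑ l ∈ fA α, t ⇑l := by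
          apply mul_le_mul_of_nonneg_right hcard
          apply Finset.sum_nonneg
          intro l _
          rw [ht]
          positivity
  -- the double sum is at most the product of squared norms
  have hdouble : ∑ α ∈ P.support, ∑ l ∈ fA α, t ⇑l ≤ ∏ j, polyNorm (p j) ^ 2 := by
    have hdisj : (P.support : Set (Fin d →₀ ℕ)).PairwiseDisjoint fA := by
      intro a _ b _ hab
      simp only [Function.onFun]
      rw [Finset.disjoint_left]
      intro l hla hlb
      rw [hfA, mem_finsuppAntidiag] at hla hlb
      exact hab (hla.1.symm.trans hlb.1)
    rw [← Finset.sum_biUnion hdisj]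
    set emb : (Fin n →₀ (Fin d →₀ ℕ)) ↪ (Fin n → (Fin d →₀ ℕ)) :=
      ⟨fun l => ⇑l, DFunLike.coe_injective⟩ with hemb
    rw [show ∑ l ∈ P.support.biUnion fA, t ⇑l
        = ∑ k ∈ (P.support.biUnion fA).map emb, t k from (Finset.sum_map _ emb t).symm]
    set B := Fintype.piFinset (fun j => (p j).support) with hB
    have htnonneg : ∀ k : Fin n → (Fin d →₀ ℕ), 0 ≤ t k := by
      intro k; rw [ht]; positivity
    have hzero : ∀ k ∈ (P.support.biUnion fA).map emb ∪ B, k ∉ B → t k = 0 := by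
      intro k _ hkB
      rw [hB, Fintype.mem_piFinset] at hkB
      push_neg at hkB
      obtain ⟨j, hj⟩ := hkB
      rw [ht]
      apply Finset.prod_eq_zero (mem_univ j)
      rw [MvPolynomial.notMem_support_iff] at hj
      rw [hj]
      ring
    calc ∑ k ∈ (P.support.biUnion fA).map emb, t k
        ≤ ∑ k ∈ (P.support.biUnion fA).map emb ∪ B, t k :=
          Finset.sum_le_sum_of_subset_of_nonneg Finset.subset_union_left
            (fun k _ _ => htnonneg k)
      _ = ∑ k ∈ B, t k := (Finset.sum_subset Finset.subset_union_right hzero).symm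
      _ = ∏ j, ∑ β ∈ (p j).support, (p j).coeff β ^ 2 := by
          rw [hB, ht, Finset.prod_univ_sum]
      _ = ∏ j, polyNorm (p j) ^ 2 := by
          refine Finset.prod_congr rfl fun j _ => ?_
          rw [polyNorm_sq]
  calc polyNorm P ^ 2 = ∑ α ∈ P.support, (P.coeff α) ^ 2 := polyNorm_sq P
    _ ≤ ∑ α ∈ P.support, (n : ℝ) ^ S * ∑ l ∈ fA α, t ⇑l := Finset.sum_le_sum step1
    _ = (n : ℝ) ^ S * ∑ α ∈ P.support, ∑ l ∈ fA α, t ⇑l := by rw [Finset.mul_sum]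
    _ ≤ (n : ℝ) ^ S * ∏ j, polyNorm (p j) ^ 2 := by
        apply mul_le_mul_of_nonneg_left hdouble
        positivity
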